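/- arXiv:1208.3213 — 3 statements merged into one kernel-verified Lean document; each statement's English description precedes it below -/
import Mathlib

section
/- There exists an admissible strategy ũ such that for every k ≥ 1, E[ℓ_k(ũ_k) | 𝒴_{0,k}] ≤ ess inf_{u ∈ 𝕌_{0,k}} E[ℓ_k(u) | 𝒴_{0,k}] + 1/k almost surely; moreover, any such strategy ũ is mean optimal, i.e., liminf_{T→∞} (E[L_T(u)] − E[L_T(ũ)]) ≥ 0 for every admissible strategy u. -/
open MeasureTheory Filter Set
open scoped ENNReal Topology symmDiff

noncomputable section

namespace ErgodicDecisions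

variable {Ω U : Type*}

/-- The `ℤ`-indexed iterates of an invertible transformation `T` with inverse `S`:
`iter T S n = Tⁿ` for `n ≥ 0` and `iter T S (-n) = Sⁿ`. -/
def iter (T S : Ω → Ω) : ℤ → Ω → Ω
  | Int.ofNat n => T^[n]
  | Int.negSucc n => S^[n + 1]

variable {m0 : MeasurableSpace Ω} [mU : MeasurableSpace U]

/-- The observation σ-field `𝒴_{m,n} = ⋁_{k=m}^{n} T^{-k} 𝒴`. -/
def obsField (T S : Ω → Ω) (Y : MeasurableSpace Ω) (m n : ℤ) : MeasurableSpace Ω :=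
  ⨆ k ∈ Set.Icc m n, MeasurableSpace.comap (iter T S k) Y

/-- The observation σ-field `𝒴_{-∞,n} = ⋁_{k ≤ n} T^{-k} 𝒴`. -/
def obsFieldLE (T S : Ω → Ω) (Y : MeasurableSpace Ω) (n : ℤ) : MeasurableSpace Ω :=
  ⨆ k ∈ Set.Iic n, MeasurableSpace.comap (iter T S k) Y

/-- `𝕌_{m,n}`: the set of `𝒴_{m,n}`-measurable decision maps `Ω → U`. -/
def Umn (T S : Ω → Ω) (Y : MeasurableSpace Ω) (m n : ℤ) : Set (Ω → U) :=
  {v | Measurable[obsField T S Y m n] v}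

/-- `𝕌_n = ⋃_{m ≤ n} 𝕌_{m,n}`. -/
def Un (T S : Ω → Ω) (Y : MeasurableSpace Ω) (n : ℤ) : Set (Ω → U) :=
  ⋃ m ∈ Set.Iic n, Umn T S Y m n

/-- The loss at time `n` of the decision map `v`: `ℓ_n(v)(ω) = ℓ(v(ω), Tⁿω)`. -/
def lossAt (T S : Ω → Ω) (ℓ : U → Ω → ℝ) (n : ℤ) (v : Ω → U) (ω : Ω) : ℝ :=
  ℓ (v ω) (iter T S n ω)

/-- An admissible strategy: `u_k` is `𝒴_{0,k}`-measurable for every `k ≥ 1`. -/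
def Admissible (T S : Ω → Ω) (Y : MeasurableSpace Ω) (u : ℕ → Ω → U) : Prop :=
  ∀ k : ℕ, 1 ≤ k → u k ∈ Umn T S Y 0 (k : ℤ)

/-- The time-average loss `L_T(u) = T⁻¹ ∑_{k=1}^T ℓ_k(u_k)`. -/
def avgLoss (T S : Ω → Ω) (ℓ : U → Ω → ℝ) (u : ℕ → Ω → U) (n : ℕ) (ω : Ω) : ℝ :=
  (n : ℝ)⁻¹ * ∑ k ∈ Finset.Icc 1 n, lossAt T S ℓ (k : ℤ) (u k) ω

/-- `g` is an essential infimum (an a.e.-greatest lower bound among random variables)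
of the family `(f i)_{i ∈ S₀}` under `P`. -/
def IsEssInfFam {ι : Type*} (P : Measure Ω) (S₀ : Set ι) (f : ι → Ω → ℝ) (g : Ω → ℝ) : Prop :=
  Measurable[m0] g ∧ (∀ i ∈ S₀, ∀ᵐ ω ∂P, g ω ≤ f i ω) ∧
    ∀ h : Ω → ℝ, Measurable[m0] h → (∀ i ∈ S₀, ∀ᵐ ω ∂P, h ω ≤ f i ω) → ∀ᵐ ω ∂P, h ω ≤ g ω

/-- `g` is an essential supremum (an a.e.-least upper bound among random variables)
of the family `(f i)_{i ∈ S₀}` under `P`. -/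
def IsEssSupFam {ι : Type*} (P : Measure Ω) (S₀ : Set ι) (f : ι → Ω → ℝ) (g : Ω → ℝ) : Prop :=
  Measurable[m0] g ∧ (∀ i ∈ S₀, ∀ᵐ ω ∂P, f i ω ≤ g ω) ∧
    ∀ h : Ω → ℝ, Measurable[m0] h → (∀ i ∈ S₀, ∀ᵐ ω ∂P, f i ω ≤ h ω) → ∀ᵐ ω ∂P, g ω ≤ h ω

/-- A mean-optimal strategy in the sense of Lemma 2.5 of the paper:
`E[ℓ_k(ũ_k)|𝒴_{0,k}] ≤ ess inf_{u ∈ 𝕌_{0,k}} E[ℓ_k(u)|𝒴_{0,k}] + 1/k` a.s. for all `k ≥ 1`. -/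
def MeanOptimalStrategy (P : Measure Ω) (T S : Ω → Ω) (Y : MeasurableSpace Ω)
    (ℓ : U → Ω → ℝ) (ut : ℕ → Ω → U) : Prop :=
  Admissible T S Y ut ∧
    ∀ k : ℕ, 1 ≤ k → ∃ g : Ω → ℝ,
      IsEssInfFam P (Umn T S Y 0 (k : ℤ))
        (fun v => P[lossAt T S ℓ (k : ℤ) v | obsField T S Y 0 (k : ℤ)]) g ∧
      ∀ᵐ ω ∂P, (P[lossAt T S ℓ (k : ℤ) (ut k) | obsField T S Y 0 (k : ℤ)]) ω ≤ g ω + (k : ℝ)⁻¹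

/-- Pathwise optimality (Definition 2.2). -/
def PathwiseOptimal (P : Measure Ω) (T S : Ω → Ω) (Y : MeasurableSpace Ω)
    (ℓ : U → Ω → ℝ) (us : ℕ → Ω → U) : Prop :=
  Admissible T S Y us ∧
    ∀ u : ℕ → Ω → U, Admissible T S Y u →
      ∀ᵐ ω ∂P,
        0 ≤ Filter.liminf (fun n : ℕ => avgLoss T S ℓ u n ω - avgLoss T S ℓ us n ω) atTop

/-- Weak pathwise optimality (Definition 2.3). -/
def WeaklyPathwiseOptimal (P : Measure Ω) (T S : Ω → Ω) (Y : MeasurableSpace Ω)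
    (ℓ : U → Ω → ℝ) (us : ℕ → Ω → U) : Prop :=
  Admissible T S Y us ∧
    ∀ u : ℕ → Ω → U, Admissible T S Y u → ∀ ε : ℝ, 0 < ε →
      Tendsto (fun n : ℕ => P {ω | -ε ≤ avgLoss T S ℓ u n ω - avgLoss T S ℓ us n ω})
        atTop (𝓝 1)

/-- Mean optimality (Definition 2.4). -/
def MeanOptimal (P : Measure Ω) (T S : Ω → Ω) (Y : MeasurableSpace Ω)
    (ℓ : U → Ω → ℝ) (us : ℕ → Ω → U) : Prop :=
  Admissible T S Y us ∧
    ∀ u : ℕ → Ω → U, Admissible T S Y u →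
      0 ≤ Filter.liminf
        (fun n : ℕ => (∫ ω, avgLoss T S ℓ u n ω ∂P) - ∫ ω, avgLoss T S ℓ us n ω ∂P) atTop

/-- Two σ-fields on `Ω` agree modulo `P`-null sets. -/
def EqModP (P : Measure Ω) (m₁ m₂ : MeasurableSpace Ω) : Prop :=
  (∀ A : Set Ω, MeasurableSet[m₁] A → ∃ B : Set Ω, MeasurableSet[m₂] B ∧ P (A ∆ B) = 0) ∧
    ∀ A : Set Ω, MeasurableSet[m₂] A → ∃ B : Set Ω, MeasurableSet[m₁] B ∧ P (A ∆ B) = 0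

/-- Conditional K-automorphism relative to `Z` (Definition 1.4); `S` is the inverse of `T`,
so that `T^{-k}𝒳 = comap T^k 𝒳` and `T^{k}𝒳 = comap S^k 𝒳`. -/
def CondK (P : Measure Ω) (T S : Ω → Ω) (Z : MeasurableSpace Ω) : Prop :=
  ∃ X : MeasurableSpace Ω, X ≤ m0 ∧
    X ≤ MeasurableSpace.comap T X ∧
    EqModP P (⨆ k : ℕ, MeasurableSpace.comap (T^[k + 1]) X) m0 ∧
    EqModP P (⨅ k : ℕ, Z ⊔ MeasurableSpace.comap (S^[k + 1]) X) Z

/-- Conditional weak mixing relative to `Z` (Definition 1.3); `S` is the inverse of `T`,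
so that `T^k B = (S^[k])⁻¹ B`. -/
def CondWeakMixing (P : Measure Ω) (S : Ω → Ω) (Z : MeasurableSpace Ω) : Prop :=
  ∀ A B : Set Ω, MeasurableSet[m0] A → MeasurableSet[m0] B →
    Tendsto
      (fun n : ℕ => ∫ ω,
        (n : ℝ)⁻¹ * ∑ k ∈ Finset.Icc 1 n,
          |(P[(A ∩ S^[k] ⁻¹' B).indicator (fun _ => (1 : ℝ)) | Z]) ω -
            (P[A.indicator (fun _ => (1 : ℝ)) | Z]) ω *
              (P[(S^[k] ⁻¹' B).indicator (fun _ => (1 : ℝ)) | Z]) ω| ∂P)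
      atTop (𝓝 0)

/-- The tail σ-field `⋂_{k≥1} (𝒴_{-∞,0} ∨ T^k 𝒳)`. -/
def tailField (T S : Ω → Ω) (Y X : MeasurableSpace Ω) : MeasurableSpace Ω :=
  ⨅ k : ℕ, obsFieldLE T S Y 0 ⊔ MeasurableSpace.comap (S^[k + 1]) X

/-- The truncated loss `ℓ_0(v)·1_{Λ ≤ M}`. -/
def truncLoss (ℓ : U → Ω → ℝ) (Λ : Ω → ℝ) (M : ℝ) (v : Ω → U) (ω : Ω) : ℝ :=
  if Λ ω ≤ M then ℓ (v ω) ω else 0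

/-- `ℓ̄_0^M(v) = ℓ_0(v)·1_{Λ≤M} − E[ℓ_0(v)·1_{Λ≤M} | 𝒴_{-∞,0}]`. -/
def barLoss (P : Measure Ω) (T S : Ω → Ω) (Y : MeasurableSpace Ω)
    (ℓ : U → Ω → ℝ) (Λ : Ω → ℝ) (M : ℝ) (v : Ω → U) (ω : Ω) : ℝ :=
  truncLoss ℓ Λ M v ω - (P[truncLoss ℓ Λ M v | obsFieldLE T S Y 0]) ω

/-- The uniform conditional mixing assumption of Theorem 2.12:
`lim_{M→∞} limsup_{T→∞} E[(1/T)∑_{k=1}^T ess sup_{u,u'∈𝕌₀}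
|E[(ℓ̄₀^M(u)∘T^{-k})·ℓ̄₀^M(u')|𝒴_{-∞,0}]|] = 0`. -/
def UniformCondMixing (P : Measure Ω) (T S : Ω → Ω) (Y : MeasurableSpace Ω)
    (ℓ : U → Ω → ℝ) (Λ : Ω → ℝ) : Prop :=
  ∃ G : ℝ → ℕ → Ω → ℝ,
    (∀ (M : ℝ) (k : ℕ),
      IsEssSupFam P ((Un T S Y 0) ×ˢ (Un T S Y 0))
        (fun p ω =>
          |(P[(fun ω' => barLoss P T S Y ℓ Λ M p.1 (S^[k] ω') *
                barLoss P T S Y ℓ Λ M p.2 ω') | obsFieldLE T S Y 0]) ω|)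
        (G M k)) ∧
    Tendsto
      (fun M : ℝ =>
        Filter.limsup
          (fun n : ℕ => ∫ ω, (n : ℝ)⁻¹ * ∑ k ∈ Finset.Icc 1 n, G M k ω ∂P) atTop)
      atTop (𝓝 0)

/-- Equimeasurability of the loss (Definition 3.1): for every `ε > 0` there is a set of
probability at least `1-ε` on which the family `{ℓ(u,·) : u ∈ U}` is totally bounded
in `L^∞(P)`. -/
def Equimeasurable (P : Measure Ω) (ℓ : U → Ω → ℝ) : Prop :=
  ∀ ε : ℝ, 0 < ε → ∃ Ωε : Set Ω, MeasurableSet[m0] Ωε ∧ 1 - ENNReal.ofReal ε ≤ P Ωε ∧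
    ∀ δ : ℝ, 0 < δ → ∃ 𝒩 : Finset (Ω → ℝ), ∀ u : U, ∃ f ∈ 𝒩,
      eLpNorm (fun ω => Ωε.indicator (ℓ u) ω - f ω) ⊤ P ≤ ENNReal.ofReal δ


lemma key' {Ω U : Type*} [mU : MeasurableSpace U] [Nonempty U]
    (m : MeasurableSpace Ω) {m0 : MeasurableSpace Ω}
    (P : Measure Ω) [IsProbabilityMeasure P] (hm : m ≤ m0)
    (f : U → Ω → ℝ) (hf : Measurable fun p : U × Ω => f p.1 p.2)
    (Λ : Ω → ℝ) (hΛ : Integrable Λ P) (hdom : ∀ u ω, |f u ω| ≤ Λ ω)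
    (ε : ℝ) (hε : 0 < ε) :
    ∃ (g : Ω → ℝ) (ut : Ω → U), Measurable[m] ut ∧
      IsEssInfFam P {v : Ω → U | Measurable[m] v}
        (fun v => P[(fun ω => f (v ω) ω) | m]) g ∧
      ∀ᵐ ω ∂P, (P[(fun ω => f (ut ω) ω) | m]) ω ≤ g ω + ε := by
  classical
  obtain ⟨u₀⟩ := ‹Nonempty U›
  -- basic measurability / integrability
  have hloss_meas : ∀ v : Ω → U, Measurable[m] v → Measurable[m0] (fun ω => f (v ω) ω) := by
    intro v hv
    exact hf.comp ((hv.mono hm le_rfl).prodMk measurable_id)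
  have hint : ∀ v : Ω → U, Measurable[m] v → Integrable (fun ω => f (v ω) ω) P := fun v hv =>
    hΛ.mono' ((hloss_meas v hv).aestronglyMeasurable)
      (ae_of_all _ fun ω => by simpa [Real.norm_eq_abs] using hdom (v ω) ω)
  have hFm : ∀ v : Ω → U, Measurable[m] (P[(fun ω => f (v ω) ω) | m]) := fun v =>
    stronglyMeasurable_condExp.measurable
  have hΛc_int : Integrable (P[Λ|m]) P := integrable_condExp
  -- a.e. bound on conditional losses
  have hFbd : ∀ v : Ω → U, Measurable[m] v →
      ∀ᵐ ω ∂P, |(P[(fun ω => f (v ω) ω) | m]) ω| ≤ (P[Λ|m]) ω := by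
    intro v hv
    have h1 : P[(fun ω => f (v ω) ω) | m] ≤ᵐ[P] P[Λ|m] :=
      condExp_mono (hint v hv) hΛ (ae_of_all _ fun ω => (abs_le.1 (hdom (v ω) ω)).2)
    have h2 : P[(fun ω => -Λ ω) | m] ≤ᵐ[P] P[(fun ω => f (v ω) ω) | m] :=
      condExp_mono hΛ.neg (hint v hv) (ae_of_all _ fun ω => (abs_le.1 (hdom (v ω) ω)).1)
    have h3 : P[(fun ω => -Λ ω) | m] =ᵐ[P] fun ω => -(P[Λ|m]) ω := condExp_neg Λ m
    filter_upwards [h1, h2, h3] with ω e1 e2 e3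
    rw [abs_le]
    exact ⟨by rw [← e3]; exact e2, e1⟩
  -- combination of two decision maps achieving the min of conditional losses
  have comb : ∀ v : Ω → U, Measurable[m] v → ∀ v' : Ω → U, Measurable[m] v' →
      ∃ w : Ω → U, Measurable[m] w ∧ (P[(fun ω => f (w ω) ω) | m]) =ᵐ[P]
        fun ω => min ((P[(fun ω => f (v ω) ω) | m]) ω) ((P[(fun ω => f (v' ω) ω) | m]) ω) := by
    intro v hv v' hv'
    set s : Set Ω := {ω | (P[(fun ω => f (v ω) ω) | m]) ω ≤ (P[(fun ω => f (v' ω) ω) | m]) ω}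
      with hsdef
    have hs : MeasurableSet[m] s := measurableSet_le (hFm v) (hFm v')
    refine ⟨s.piecewise v v', Measurable.piecewise hs hv hv', ?_⟩
    have hps : (fun ω => f ((s.piecewise v v') ω) ω)
        = s.indicator (fun ω => f (v ω) ω) + sᶜ.indicator (fun ω => f (v' ω) ω) := by
      funext ω
      by_cases hω : ω ∈ s
      · simp [Set.piecewise_eq_of_mem _ _ _ hω, Set.indicator_of_mem hω,
          Set.indicator_of_notMem (Set.notMem_compl_iff.2 hω)]
      · simp [Set.piecewise_eq_of_notMem _ _ _ hω, Set.indicator_of_notMem hω,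
          Set.indicator_of_mem (Set.mem_compl hω)]
    have h1 : (P[(fun ω => f ((s.piecewise v v') ω) ω) | m]) =ᵐ[P]
        P[s.indicator (fun ω => f (v ω) ω) | m] + P[sᶜ.indicator (fun ω => f (v' ω) ω) | m] := by
      rw [hps]
      exact condExp_add ((hint v hv).indicator (hm s hs)) ((hint v' hv').indicator (hm sᶜ hs.compl)) m
    have h2 := condExp_indicator (μ := P) (hint v hv) hs
    have h3 := condExp_indicator (μ := P) (hint v' hv') hs.compl
    filter_upwards [h1, h2, h3] with ω e1 e2 e3
    rw [e1, Pi.add_apply, e2, e3]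
    by_cases hω : ω ∈ s
    · rw [Set.indicator_of_mem hω, Set.indicator_of_notMem (Set.notMem_compl_iff.2 hω),
        add_zero, min_eq_left hω]
    · rw [Set.indicator_of_notMem hω, Set.indicator_of_mem (Set.mem_compl hω), zero_add,
        min_eq_right (le_of_lt (not_le.1 hω))]
  obtain ⟨cmb, hcmb⟩ : ∃ cmb : (Ω → U) → (Ω → U) → (Ω → U),
      ∀ v : Ω → U, Measurable[m] v → ∀ v' : Ω → U, Measurable[m] v' →
        Measurable[m] (cmb v v') ∧ (P[(fun ω => f ((cmb v v') ω) ω) | m]) =ᵐ[P]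
          fun ω => min ((P[(fun ω => f (v ω) ω) | m]) ω) ((P[(fun ω => f (v' ω) ω) | m]) ω) := by
    choose c h1 h2 using comb
    refine ⟨fun v v' => if h : Measurable[m] v ∧ Measurable[m] v' then c v h.1 v' h.2 else v,
      fun v hv v' hv' => ?_⟩
    beta_reduce
    rw [dif_pos ⟨hv, hv'⟩]
    exact ⟨h1 v hv v' hv', h2 v hv v' hv'⟩
  -- the infimum of expected conditional losses
  set Eset : Set ℝ :=
    (fun v : Ω → U => ∫ ω, (P[(fun ω => f (v ω) ω) | m]) ω ∂P) '' {v | Measurable[m] v}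
    with hEdef
  have hEne : Eset.Nonempty := ⟨_, ⟨fun _ => u₀, measurable_const, rfl⟩⟩
  have hlb : ∀ r ∈ Eset, -(∫ ω, Λ ω ∂P) ≤ r := by
    rintro r ⟨v, hv, rfl⟩
    show -(∫ ω, Λ ω ∂P) ≤ ∫ ω, (P[(fun ω => f (v ω) ω) | m]) ω ∂P
    rw [integral_condExp hm]
    calc -(∫ ω, Λ ω ∂P) = ∫ ω, -Λ ω ∂P := (integral_neg Λ).symm
      _ ≤ ∫ ω, f (v ω) ω ∂P :=
        integral_mono hΛ.neg (hint v hv) (fun ω => (abs_le.1 (hdom (v ω) ω)).1)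
  set α : ℝ := sInf Eset with hαdef
  have hα_le : ∀ u' : Ω → U, Measurable[m] u' →
      α ≤ ∫ ω, (P[(fun ω => f (u' ω) ω) | m]) ω ∂P := fun u' hu' =>
    csInf_le ⟨_, hlb⟩ ⟨u', hu', rfl⟩
  have hvn : ∀ n : ℕ, ∃ v : Ω → U, Measurable[m] v ∧
      ∫ ω, (P[(fun ω => f (v ω) ω) | m]) ω ∂P < α + 1/((n:ℝ)+1) := by
    intro n
    have hlt : α < α + 1/((n:ℝ)+1) := by
      have : (0:ℝ) < 1/((n:ℝ)+1) := by positivity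
      linarith
    obtain ⟨r, hr, hrlt⟩ := exists_lt_of_csInf_lt hEne hlt
    obtain ⟨v, hv, rfl⟩ := hr
    exact ⟨v, hv, hrlt⟩
  choose v hv𝕌 hvlt using hvn
  -- the decreasing sequence
  set w : ℕ → Ω → U := fun n => Nat.rec (v 0) (fun k wk => cmb wk (v (k+1))) n with hwdef
  have hw𝕌 : ∀ n, Measurable[m] (w n) := by
    intro n
    induction n with
    | zero => exact hv𝕌 0
    | succ k ih => exact (hcmb (w k) ih (v (k+1)) (hv𝕌 (k+1))).1
  have hwmin : ∀ n, (P[(fun ω => f ((w (n+1)) ω) ω) | m]) =ᵐ[P]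
      fun ω => min ((P[(fun ω => f ((w n) ω) ω) | m]) ω)
        ((P[(fun ω => f ((v (n+1)) ω) ω) | m]) ω) :=
    fun n => (hcmb (w n) (hw𝕌 n) (v (n+1)) (hv𝕌 (n+1))).2
  have hw_lt : ∀ n, ∫ ω, (P[(fun ω => f ((w n) ω) ω) | m]) ω ∂P < α + 1/((n:ℝ)+1) := by
    intro n
    cases n with
    | zero => exact hvlt 0
    | succ k =>
      have h1 : (P[(fun ω => f ((w (k+1)) ω) ω) | m]) ≤ᵐ[P]
          (P[(fun ω => f ((v (k+1)) ω) ω) | m]) := by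
        filter_upwards [hwmin k] with ω h
        rw [h]; exact min_le_right _ _
      exact lt_of_le_of_lt (integral_mono_ae integrable_condExp integrable_condExp h1)
        (hvlt (k+1))
  have hwanti : ∀ᵐ ω ∂P, ∀ n, (P[(fun ω => f ((w (n+1)) ω) ω) | m]) ω ≤
      (P[(fun ω => f ((w n) ω) ω) | m]) ω := by
    rw [ae_all_iff]
    intro n
    filter_upwards [hwmin n] with ω h
    rw [h]; exact min_le_left _ _
  have hwbd : ∀ᵐ ω ∂P, ∀ n, |(P[(fun ω => f ((w n) ω) ω) | m]) ω| ≤ (P[Λ|m]) ω :=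
    ae_all_iff.2 fun n => hFbd _ (hw𝕌 n)
  -- the candidate essential infimum
  set g : Ω → ℝ := fun ω => ⨅ n, (P[(fun ω => f ((w n) ω) ω) | m]) ω with hgdef
  have hgm : Measurable[m] g := Measurable.iInf fun n => hFm (w n)
  have hconv : ∀ᵐ ω ∂P, Tendsto (fun n => (P[(fun ω => f ((w n) ω) ω) | m]) ω) atTop (𝓝 (g ω)) := by
    filter_upwards [hwanti, hwbd] with ω h1 h2
    refine tendsto_atTop_ciInf (antitone_nat_of_succ_le h1) ⟨-(P[Λ|m]) ω, ?_⟩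
    rintro x ⟨n, rfl⟩
    exact (abs_le.1 (h2 n)).1
  have hgbd : ∀ᵐ ω ∂P, |g ω| ≤ (P[Λ|m]) ω := by
    filter_upwards [hwbd] with ω h2
    rw [abs_le]
    constructor
    · exact le_ciInf fun n => (abs_le.1 (h2 n)).1
    · refine le_trans (ciInf_le ⟨-(P[Λ|m]) ω, ?_⟩ 0) (abs_le.1 (h2 0)).2
      rintro x ⟨n, rfl⟩
      exact (abs_le.1 (h2 n)).1
  have hgint : Integrable g P := by
    refine hΛc_int.mono' ((hgm.mono hm le_rfl).aestronglyMeasurable) ?_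
    filter_upwards [hgbd] with ω h
    rwa [Real.norm_eq_abs]
  have hgtend : Tendsto (fun n => ∫ ω, (P[(fun ω => f ((w n) ω) ω) | m]) ω ∂P) atTop
      (𝓝 (∫ ω, g ω ∂P)) := by
    refine tendsto_integral_of_dominated_convergence (fun ω => (P[Λ|m]) ω)
      (fun n => (stronglyMeasurable_condExp.mono hm).aestronglyMeasurable) hΛc_int
      (fun n => ?_) hconv
    filter_upwards [hwbd] with ω h
    simpa [Real.norm_eq_abs] using h n
  have hαg : ∫ ω, g ω ∂P = α := by
    have h1 : Tendsto (fun n : ℕ => α + 1/((n:ℝ)+1)) atTop (𝓝 α) := by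
      simpa using (tendsto_const_nhds : Tendsto (fun _ : ℕ => α) atTop (𝓝 α)).add tendsto_one_div_add_atTop_nhds_zero_nat
    exact le_antisymm
      (le_of_tendsto_of_tendsto' hgtend h1 fun n => (hw_lt n).le)
      (ge_of_tendsto' hgtend fun n => hα_le _ (hw𝕌 n))
  -- g is an a.e. lower bound of the family
  have hg_le : ∀ u' : Ω → U, Measurable[m] u' →
      ∀ᵐ ω ∂P, g ω ≤ (P[(fun ω => f (u' ω) ω) | m]) ω := by
    intro u' hu'
    have hminconv : ∀ᵐ ω ∂P,
        Tendsto (fun n => min ((P[(fun ω => f ((w n) ω) ω) | m]) ω)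
          ((P[(fun ω => f (u' ω) ω) | m]) ω)) atTop
          (𝓝 (min (g ω) ((P[(fun ω => f (u' ω) ω) | m]) ω))) := by
      filter_upwards [hconv] with ω h
      exact h.min tendsto_const_nhds
    have hbound : ∀ n : ℕ, ∀ᵐ ω ∂P, ‖min ((P[(fun ω => f ((w n) ω) ω) | m]) ω)
        ((P[(fun ω => f (u' ω) ω) | m]) ω)‖ ≤ (P[Λ|m]) ω := by
      intro n
      filter_upwards [hwbd, hFbd u' hu'] with ω h1 h2
      rw [Real.norm_eq_abs, abs_le]
      exact ⟨le_min (abs_le.1 (h1 n)).1 (abs_le.1 h2).1,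
        (min_le_left _ _).trans (abs_le.1 (h1 n)).2⟩
    have htendmin : Tendsto (fun n => ∫ ω, min ((P[(fun ω => f ((w n) ω) ω) | m]) ω)
        ((P[(fun ω => f (u' ω) ω) | m]) ω) ∂P) atTop
        (𝓝 (∫ ω, min (g ω) ((P[(fun ω => f (u' ω) ω) | m]) ω) ∂P)) :=
      tendsto_integral_of_dominated_convergence (fun ω => (P[Λ|m]) ω)
        (fun n => (((hFm (w n)).mono hm le_rfl).min
          ((hFm u').mono hm le_rfl)).aestronglyMeasurable)
        hΛc_int hbound hminconv
    have hmem : ∀ n : ℕ, α ≤ ∫ ω, min ((P[(fun ω => f ((w n) ω) ω) | m]) ω)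
        ((P[(fun ω => f (u' ω) ω) | m]) ω) ∂P := by
      intro n
      obtain ⟨hc1, hc2⟩ := hcmb (w n) (hw𝕌 n) u' hu'
      rw [← integral_congr_ae hc2]
      exact hα_le _ hc1
    have hαmin : α ≤ ∫ ω, min (g ω) ((P[(fun ω => f (u' ω) ω) | m]) ω) ∂P :=
      ge_of_tendsto' htendmin hmem
    have hminint : Integrable (fun ω => min (g ω) ((P[(fun ω => f (u' ω) ω) | m]) ω)) P := by
      refine hΛc_int.mono' (((hgm.mono hm le_rfl).min
        ((hFm u').mono hm le_rfl)).aestronglyMeasurable) ?_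
      filter_upwards [hgbd, hFbd u' hu'] with ω h1 h2
      rw [Real.norm_eq_abs, abs_le]
      exact ⟨le_min (abs_le.1 h1).1 (abs_le.1 h2).1, (min_le_left _ _).trans (abs_le.1 h1).2⟩
    have hzero : ∀ᵐ ω ∂P, g ω - min (g ω) ((P[(fun ω => f (u' ω) ω) | m]) ω) = 0 := by
      have hnn : 0 ≤ᵐ[P] fun ω => g ω - min (g ω) ((P[(fun ω => f (u' ω) ω) | m]) ω) :=
        ae_of_all _ fun ω => sub_nonneg.2 (min_le_left _ _)
      have hint' : Integrable (fun ω => g ω - min (g ω) ((P[(fun ω => f (u' ω) ω) | m]) ω)) P :=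
        hgint.sub hminint
      have hI : ∫ ω, (g ω - min (g ω) ((P[(fun ω => f (u' ω) ω) | m]) ω)) ∂P = 0 := by
        rw [integral_sub hgint hminint, hαg]
        have := hαmin
        have h2 := integral_nonneg_of_ae (μ := P) hnn
        rw [integral_sub hgint hminint, hαg] at h2
        linarith
      exact (integral_eq_zero_iff_of_nonneg_ae hnn hint').1 hI
    filter_upwards [hzero] with ω h
    have hmin : min (g ω) ((P[(fun ω => f (u' ω) ω) | m]) ω) = g ω := by linarith
    rw [← hmin]
    exact min_le_right _ _
  -- the selection
  have hex : ∀ ω, ∃ n, (P[(fun ω => f ((w n) ω) ω) | m]) ω < g ω + ε := by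
    intro ω
    refine exists_lt_of_ciInf_lt ?_
    show g ω < g ω + ε
    linarith
  have hp : ∀ n, MeasurableSet[m] {ω | (P[(fun ω => f ((w n) ω) ω) | m]) ω < g ω + ε} :=
    fun n => measurableSet_lt (hFm (w n)) (hgm.add_const ε)
  refine ⟨g, fun ω => w (Nat.find (hex ω)) ω, Measurable.find hw𝕌 hp hex,
    ⟨hgm.mono hm le_rfl, fun v' hv' => hg_le v' hv', fun h hmeas hh => ?_⟩, ?_⟩
  · have : ∀ᵐ ω ∂P, ∀ n, h ω ≤ (P[(fun ω => f ((w n) ω) ω) | m]) ω :=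
      ae_all_iff.2 fun n => hh (w n) (hw𝕌 n)
    filter_upwards [this] with ω hall
    exact le_ciInf hall
  · -- the conditional loss of the selected strategy
    set N : Ω → ℕ := fun ω => Nat.find (hex ω) with hNdef
    have hNmeas : Measurable[m] N :=
      Measurable.find (f := fun n (_ : Ω) => n) (fun n => measurable_const) hp hex
    set ut : Ω → U := fun ω => w (N ω) ω with hutdef
    have hut_meas : Measurable[m] ut := Measurable.find hw𝕌 hp hex
    have key_n : ∀ n : ℕ, ∀ᵐ ω ∂P, N ω = n →
        (P[(fun ω => f (ut ω) ω) | m]) ω = (P[(fun ω => f ((w n) ω) ω) | m]) ω := by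
      intro n
      set B : Set Ω := N ⁻¹' {n} with hBdef
      have hB : MeasurableSet[m] B := hNmeas (measurableSet_singleton n)
      have hagree : B.indicator (fun ω => f (ut ω) ω) = B.indicator (fun ω => f ((w n) ω) ω) := by
        funext ω
        by_cases hω : ω ∈ B
        · have hNω : N ω = n := hω
          rw [Set.indicator_of_mem hω, Set.indicator_of_mem hω]
          show f (w (N ω) ω) ω = f (w n ω) ω
          rw [hNω]
        · rw [Set.indicator_of_notMem hω, Set.indicator_of_notMem hω]
      have h1 := condExp_indicator (μ := P) (hint ut hut_meas) hB
      have h2 := condExp_indicator (μ := P) (hint (w n) (hw𝕌 n)) hB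
      rw [hagree] at h1
      filter_upwards [h1, h2] with ω e1 e2 hNω
      have hωB : ω ∈ B := hNω
      have := e1.symm.trans e2
      rwa [Set.indicator_of_mem hωB, Set.indicator_of_mem hωB] at this
    have : ∀ᵐ ω ∂P, ∀ n, N ω = n →
        (P[(fun ω => f (ut ω) ω) | m]) ω = (P[(fun ω => f ((w n) ω) ω) | m]) ω :=
      ae_all_iff.2 key_n
    filter_upwards [this] with ω h
    rw [h (N ω) rfl]
    exact (Nat.find_spec (hex ω)).le

/-- Lemma 2.5: a mean-optimal strategy (in the `ε = 1/k` sense) exists, and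
any such strategy is mean optimal. -/
theorem statement2
    {Ω U : Type*} [m0 : MeasurableSpace Ω] [MeasurableSpace U] [Nonempty U]
    (P : Measure Ω) [IsProbabilityMeasure P]
    (T S : Ω → Ω) (hT : Ergodic T P) (hS : MeasurePreserving S P P)
    (hST : Function.LeftInverse S T) (hTS : Function.RightInverse S T)
    (ℓ : U → Ω → ℝ) (hℓ : Measurable fun p : U × Ω => ℓ p.1 p.2)
    (Λ : Ω → ℝ) (hΛ : Integrable Λ P) (hdom : ∀ u ω, |ℓ u ω| ≤ Λ ω)
    (Y : MeasurableSpace Ω) (hY : Y ≤ m0)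
    :
    (∃ ut : ℕ → Ω → U, MeanOptimalStrategy P T S Y ℓ ut) ∧
      ∀ ut : ℕ → Ω → U, MeanOptimalStrategy P T S Y ℓ ut → MeanOptimal P T S Y ℓ ut := by
  letI m1 : MeasurableSpace Ω := m0
  have hitm : ∀ f : Ω → Ω, @Measurable Ω Ω m0 m0 f → ∀ n : ℕ, @Measurable Ω Ω m0 m0 f^[n] := by
    intro f hf n
    induction n with
    | zero => exact measurable_id
    | succ p ih => rw [Function.iterate_succ]; exact ih.comp hf
  have hitmp : ∀ f : Ω → Ω, MeasurePreserving f P P → ∀ n : ℕ, MeasurePreserving f^[n] P P := by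
    intro f hf n
    induction n with
    | zero => exact MeasurePreserving.id P
    | succ p ih => rw [Function.iterate_succ]; exact ih.comp hf
  have hiter_meas : ∀ k : ℤ, @Measurable Ω Ω m0 m0 (iter T S k) := by
    intro k
    cases k with
    | ofNat n => exact hitm T hT.toMeasurePreserving.measurable n
    | negSucc n => exact hitm S hS.measurable (n + 1)
  have hiter_mp : ∀ k : ℤ, MeasurePreserving (iter T S k) P P := by
    intro k
    cases k with
    | ofNat n => exact hitmp T hT.toMeasurePreserving n
    | negSucc n => exact hitmp S hS (n + 1)
  have hOF : ∀ n : ℤ, obsField T S Y 0 n ≤ m0 := by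
    intro n
    refine iSup₂_le fun k _ => ?_
    exact le_trans (MeasurableSpace.comap_mono hY) (hiter_meas k).comap_le
  have hΛk : ∀ k : ℤ, Integrable (fun ω => Λ (iter T S k ω)) P := fun k =>
    ((hiter_mp k).integrable_comp hΛ.aestronglyMeasurable).2 hΛ
  have hloss_meas : ∀ (k : ℤ) (v : Ω → U), Measurable[m0] v →
      Measurable[m0] (lossAt T S ℓ k v) := fun k v hv =>
    hℓ.comp (hv.prodMk (hiter_meas k))
  have hloss_int : ∀ (k : ℤ) (v : Ω → U), Measurable[m0] v →
      Integrable (lossAt T S ℓ k v) P := fun k v hv =>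
    (hΛk k).mono' ((hloss_meas k v hv).aestronglyMeasurable)
      (ae_of_all _ fun ω => by
        simpa [Real.norm_eq_abs, lossAt] using hdom (v ω) (iter T S k ω))
  -- per-time-step essential infimum and ε-optimal selection
  have main : ∀ k : ℕ, 1 ≤ k → ∃ g : Ω → ℝ, ∃ utk : Ω → U,
      Measurable[obsField T S Y 0 (k : ℤ)] utk ∧
      IsEssInfFam P (Umn T S Y 0 (k : ℤ))
        (fun v => P[lossAt T S ℓ (k : ℤ) v | obsField T S Y 0 (k : ℤ)]) g ∧
      ∀ᵐ ω ∂P, (P[lossAt T S ℓ (k : ℤ) utk | obsField T S Y 0 (k : ℤ)]) ω ≤ g ω + (k : ℝ)⁻¹ := by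
    intro k hk
    have hkpos : (0 : ℝ) < (k : ℝ)⁻¹ := by
      have : (0 : ℝ) < (k : ℝ) := by exact_mod_cast hk
      positivity
    obtain ⟨g, utk, h1, h2, h3⟩ := key' (obsField T S Y 0 (k : ℤ)) P (hOF (k : ℤ))
      (fun a ω => ℓ a (iter T S (k : ℤ) ω))
      (hℓ.comp (measurable_fst.prodMk ((hiter_meas (k : ℤ)).comp measurable_snd)))
      (fun ω => Λ (iter T S (k : ℤ) ω)) (hΛk (k : ℤ)) (fun a ω => hdom a _) (k : ℝ)⁻¹ hkpos
    exact ⟨g, utk, h1, h2, h3⟩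
  choose gg uu huu hinf hsel using main
  constructor
  · refine ⟨fun k => if hk : 1 ≤ k then uu k hk else fun _ => Classical.arbitrary U, ?_, ?_⟩
    · intro k hk
      show Measurable[obsField T S Y 0 (k : ℤ)]
        ((fun k => if hk : 1 ≤ k then uu k hk else fun _ => Classical.arbitrary U) k)
      beta_reduce
      rw [dif_pos hk]
      exact huu k hk
    · intro k hk
      refine ⟨gg k hk, hinf k hk, ?_⟩
      beta_reduce
      rw [dif_pos hk]
      exact hsel k hk
  · rintro ut ⟨hadm, hopt⟩
    refine ⟨hadm, ?_⟩
    intro u hadm_u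
    -- per-step integral comparison
    have hkey : ∀ k : ℕ, 1 ≤ k →
        ∫ ω, lossAt T S ℓ (k : ℤ) (ut k) ω ∂P
          ≤ (∫ ω, lossAt T S ℓ (k : ℤ) (u k) ω ∂P) + (k : ℝ)⁻¹ := by
      intro k hk
      obtain ⟨g, ⟨hg_meas, hg_le, hg_max⟩, hselk⟩ := hopt k hk
      set mk := obsField T S Y 0 (k : ℤ) with hmkdef
      have hmk0 : mk ≤ m0 := hOF (k : ℤ)
      set lk : Ω → ℝ := fun ω => Λ (iter T S (k : ℤ) ω) with hlkdef
      have hlkint : Integrable lk P := hΛk (k : ℤ)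
      have hmemmeas : ∀ v : Ω → U, v ∈ Umn T S Y 0 (k : ℤ) → Measurable[m0] v := fun v hv =>
        Measurable.mono hv hmk0 le_rfl
      have hcond_le : ∀ v ∈ Umn T S Y 0 (k : ℤ),
          (P[lossAt T S ℓ (k : ℤ) v | mk]) ≤ᵐ[P] (P[lk | mk]) := fun v hv =>
        condExp_mono (hloss_int _ v (hmemmeas v hv)) hlkint
          (ae_of_all _ fun ω => (abs_le.1 (hdom (v ω) (iter T S (k : ℤ) ω))).2)
      have hcond_ge : ∀ v ∈ Umn T S Y 0 (k : ℤ), ∀ᵐ ω ∂P,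
          -(P[lk | mk]) ω ≤ (P[lossAt T S ℓ (k : ℤ) v | mk]) ω := by
        intro v hv
        have h1 : (P[-lk | mk]) ≤ᵐ[P] (P[lossAt T S ℓ (k : ℤ) v | mk]) :=
          condExp_mono hlkint.neg (hloss_int _ v (hmemmeas v hv))
            (ae_of_all _ fun ω => (abs_le.1 (hdom (v ω) (iter T S (k : ℤ) ω))).1)
        filter_upwards [h1, condExp_neg (μ := P) (m := mk) lk] with ω e1 e2
        rw [e2] at e1
        simpa using e1
      have hconstmem : (fun _ : Ω => Classical.arbitrary U) ∈ Umn T S Y 0 (k : ℤ) :=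
        measurable_const
      have hgub := hg_le _ hconstmem
      have hcub := hcond_le _ hconstmem
      have hglb := hg_max (fun ω => -(P[lk | mk]) ω)
        ((stronglyMeasurable_condExp.mono hmk0).measurable.neg) hcond_ge
      have hgint : Integrable g P := by
        refine (integrable_condExp (m := mk) (μ := P) (f := lk)).mono' hg_meas.aestronglyMeasurable ?_
        filter_upwards [hglb, hgub, hcub] with ω e1 e2 e3
        rw [Real.norm_eq_abs, abs_le]
        exact ⟨e1, e2.trans e3⟩
      have e1 : ∫ ω, lossAt T S ℓ (k : ℤ) (ut k) ω ∂P
          = ∫ ω, (P[lossAt T S ℓ (k : ℤ) (ut k) | mk]) ω ∂P := (integral_condExp hmk0).symm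
      have e2 : ∫ ω, lossAt T S ℓ (k : ℤ) (u k) ω ∂P
          = ∫ ω, (P[lossAt T S ℓ (k : ℤ) (u k) | mk]) ω ∂P := (integral_condExp hmk0).symm
      have e3 : ∫ ω, (P[lossAt T S ℓ (k : ℤ) (ut k) | mk]) ω ∂P
          ≤ ∫ ω, (g ω + (k : ℝ)⁻¹) ∂P :=
        integral_mono_ae integrable_condExp (hgint.add (integrable_const _)) hselk
      have e4 : ∫ ω, (g ω + (k : ℝ)⁻¹) ∂P = (∫ ω, g ω ∂P) + (k : ℝ)⁻¹ := by
        rw [integral_add hgint (integrable_const _), integral_const]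
        simp
      have e5 : ∫ ω, g ω ∂P ≤ ∫ ω, (P[lossAt T S ℓ (k : ℤ) (u k) | mk]) ω ∂P :=
        integral_mono_ae hgint integrable_condExp (hg_le _ (hadm_u k hk))
      linarith
    -- averaging
    have havg : ∀ (v : ℕ → Ω → U), Admissible T S Y v → ∀ n : ℕ,
        ∫ ω, avgLoss T S ℓ v n ω ∂P
          = (n : ℝ)⁻¹ * ∑ k ∈ Finset.Icc 1 n, ∫ ω, lossAt T S ℓ (k : ℤ) (v k) ω ∂P := by
      intro v hv n
      simp only [avgLoss]
      rw [integral_const_mul]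
      congr 1
      rw [integral_finset_sum]
      intro k hk
      exact hloss_int (k : ℤ) (v k)
        (Measurable.mono (hv k (Finset.mem_Icc.1 hk).1) (hOF _) le_rfl)
    set c : ℕ → ℝ := fun n => (n : ℝ)⁻¹ * ∑ k ∈ Finset.Icc 1 n, (k : ℝ)⁻¹ with hcdef
    have hdiff : ∀ n : ℕ, 1 ≤ n →
        -(c n) ≤ (∫ ω, avgLoss T S ℓ u n ω ∂P) - ∫ ω, avgLoss T S ℓ ut n ω ∂P := by
      intro n hn
      rw [havg u hadm_u n, havg ut hadm n]
      have hsum : ∑ k ∈ Finset.Icc 1 n, ∫ ω, lossAt T S ℓ (k : ℤ) (ut k) ω ∂P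
          ≤ ∑ k ∈ Finset.Icc 1 n,
              ((∫ ω, lossAt T S ℓ (k : ℤ) (u k) ω ∂P) + (k : ℝ)⁻¹) :=
        Finset.sum_le_sum fun k hk => hkey k (Finset.mem_Icc.1 hk).1
      rw [Finset.sum_add_distrib] at hsum
      have h2 : (0 : ℝ) ≤ (n : ℝ)⁻¹ := by positivity
      have h3 := mul_le_mul_of_nonneg_left hsum h2
      rw [mul_add] at h3
      simp only [hcdef]
      linarith
    have hsum_eq : ∀ n : ℕ, ∑ k ∈ Finset.Icc 1 n, (k : ℝ)⁻¹
        = ∑ i ∈ Finset.range n, 1 / ((i : ℝ) + 1) := by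
      intro n
      induction n with
      | zero => simp
      | succ p ih =>
        rw [Finset.sum_Icc_succ_top (by omega : 1 ≤ p + 1), ih, Finset.sum_range_succ]
        push_cast
        rw [one_div]
    have hc0 : Tendsto c atTop (𝓝 0) := by
      have h := tendsto_one_div_add_atTop_nhds_zero_nat.cesaro
      refine h.congr fun n => ?_
      rw [← hsum_eq n]
    have hneg : Tendsto (fun n => -(c n)) atTop (𝓝 0) := by
      simpa using hc0.neg
    have hIeq : ∀ k : ℤ, ∫ ω, Λ (iter T S k ω) ∂P = ∫ ω, Λ ω ∂P := by
      intro k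
      calc ∫ ω, Λ (iter T S k ω) ∂P
          = ∫ ω, Λ ω ∂(Measure.map (iter T S k) P) :=
            (integral_map (hiter_meas k).aemeasurable
              (by rw [(hiter_mp k).map_eq]; exact hΛ.aestronglyMeasurable)).symm
        _ = ∫ ω, Λ ω ∂P := by rw [(hiter_mp k).map_eq]
    have hIloss : ∀ (k : ℕ) (v : Ω → U), Measurable[m0] v →
        -(∫ ω, Λ ω ∂P) ≤ ∫ ω, lossAt T S ℓ (k : ℤ) v ω ∂P ∧
          ∫ ω, lossAt T S ℓ (k : ℤ) v ω ∂P ≤ ∫ ω, Λ ω ∂P := by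
      intro k v hv
      have hnegint : Integrable (fun ω => -Λ (iter T S (k : ℤ) ω)) P := (hΛk (k : ℤ)).neg
      have h1 : ∫ ω, -Λ (iter T S (k : ℤ) ω) ∂P ≤ ∫ ω, lossAt T S ℓ (k : ℤ) v ω ∂P :=
        integral_mono hnegint (hloss_int (k : ℤ) v hv)
          (fun ω => (abs_le.1 (hdom (v ω) (iter T S (k : ℤ) ω))).1)
      rw [integral_neg] at h1
      have h2 : ∫ ω, lossAt T S ℓ (k : ℤ) v ω ∂P ≤ ∫ ω, Λ (iter T S (k : ℤ) ω) ∂P :=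
        integral_mono (hloss_int (k : ℤ) v hv) (hΛk (k : ℤ))
          (fun ω => (abs_le.1 (hdom (v ω) (iter T S (k : ℤ) ω))).2)
      rw [hIeq (k : ℤ)] at h1 h2
      exact ⟨h1, h2⟩
    have hcobound : IsCoboundedUnder (· ≥ ·) atTop
        (fun n : ℕ => (∫ ω, avgLoss T S ℓ u n ω ∂P) - ∫ ω, avgLoss T S ℓ ut n ω ∂P) := by
      refine isCoboundedUnder_ge_of_eventually_le atTop (x := 2 * ∫ ω, Λ ω ∂P) ?_
      filter_upwards [eventually_ge_atTop 1] with n hn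
      rw [havg u hadm_u n, havg ut hadm n]
      have hA : ∑ k ∈ Finset.Icc 1 n, ∫ ω, lossAt T S ℓ (k : ℤ) (u k) ω ∂P
          ≤ (n : ℝ) * ∫ ω, Λ ω ∂P := by
        calc ∑ k ∈ Finset.Icc 1 n, ∫ ω, lossAt T S ℓ (k : ℤ) (u k) ω ∂P
            ≤ ∑ _k ∈ Finset.Icc 1 n, ∫ ω, Λ ω ∂P :=
              Finset.sum_le_sum fun k hk => (hIloss k (u k)
                (Measurable.mono (hadm_u k (Finset.mem_Icc.1 hk).1) (hOF _) le_rfl)).2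
          _ = (n : ℝ) * ∫ ω, Λ ω ∂P := by
              rw [Finset.sum_const, Nat.card_Icc, Nat.add_sub_cancel, nsmul_eq_mul]
      have hB : -((n : ℝ) * ∫ ω, Λ ω ∂P)
          ≤ ∑ k ∈ Finset.Icc 1 n, ∫ ω, lossAt T S ℓ (k : ℤ) (ut k) ω ∂P := by
        calc -((n : ℝ) * ∫ ω, Λ ω ∂P)
            = ∑ _k ∈ Finset.Icc 1 n, -∫ ω, Λ ω ∂P := by
              rw [Finset.sum_const, Nat.card_Icc, Nat.add_sub_cancel, nsmul_eq_mul, mul_neg]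
          _ ≤ ∑ k ∈ Finset.Icc 1 n, ∫ ω, lossAt T S ℓ (k : ℤ) (ut k) ω ∂P :=
              Finset.sum_le_sum fun k hk => by
                have := (hIloss k (ut k)
                  (Measurable.mono (hadm k (Finset.mem_Icc.1 hk).1) (hOF _) le_rfl)).1
                linarith
      have h2 : (0 : ℝ) ≤ (n : ℝ)⁻¹ := by positivity
      have hn0 : (0 : ℝ) < (n : ℝ) := by exact_mod_cast hn
      have h3 : (n : ℝ)⁻¹ * (n : ℝ) = 1 := inv_mul_cancel₀ hn0.ne'
      have e6 := mul_le_mul_of_nonneg_left hA h2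
      have e7 := mul_le_mul_of_nonneg_left hB h2
      rw [← mul_assoc, h3, one_mul] at e6
      rw [mul_neg, ← mul_assoc, h3, one_mul] at e7
      linarith
    rw [← hneg.liminf_eq]
    refine liminf_le_liminf ?_ hneg.isBoundedUnder_ge hcobound
    · filter_upwards [eventually_ge_atTop 1] with n hn using hdiff n hn

end ErgodicDecisions
end
end

section
/- Suppose the decision space U is a compact metric space (with its Borel σ-field) and that the map u ↦ ℓ(u, ω) is continuous for P-almost every ω ∈ Ω. Then the loss function ℓ is equimeasurable. -/
open MeasureTheory Filter Set
open scoped ENNReal Topology symmDiff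

noncomputable section

namespace ErgodicDecisions

variable {Ω U : Type*}

variable {m0 : MeasurableSpace Ω} [mU : MeasurableSpace U]

/-- Lemma 3.5: if `U` is a compact metric space and `u ↦ ℓ(u,ω)` is
continuous for a.e. `ω`, then the loss `ℓ` is equimeasurable. -/
theorem statement11
    {Ω U : Type*} [m0 : MeasurableSpace Ω]
    [MetricSpace U] [CompactSpace U] [MeasurableSpace U] [BorelSpace U]
    (P : Measure Ω) [IsProbabilityMeasure P]
    (ℓ : U → Ω → ℝ) (hℓ : Measurable fun p : U × Ω => ℓ p.1 p.2)
    (Λ : Ω → ℝ) (hΛ : Integrable Λ P) (hdom : ∀ u ω, |ℓ u ω| ≤ Λ ω)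
    (hcont : ∀ᵐ ω ∂P, Continuous fun u => ℓ u ω) :
    Equimeasurable P ℓ := by
  classical
  intro ε hε
  rcases isEmpty_or_nonempty U with hU | hU
  · refine ⟨Set.univ, MeasurableSet.univ, by simp, fun δ hδ => ⟨∅, fun u => (hU.false u).elim⟩⟩
  -- dense sequence
  set e : ℕ → U := TopologicalSpace.denseSeq U with he_def
  have he : DenseRange e := TopologicalSpace.denseRange_denseSeq U
  have hsec : ∀ u : U, Measurable (ℓ u) := fun u => hℓ.comp measurable_prodMk_left
  -- the modulus of continuity over the dense set
  set G : ℕ → Ω → ℝ≥0∞ := fun n ω =>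
    ⨆ p : ℕ × ℕ, if dist (e p.1) (e p.2) ≤ ((n : ℝ) + 1)⁻¹ then
      ENNReal.ofReal |ℓ (e p.1) ω - ℓ (e p.2) ω| else 0 with hG_def
  have hGmeas : ∀ n, Measurable (G n) := by
    intro n
    apply Measurable.iSup
    intro p
    split_ifs with h
    · exact ((hsec _).sub (hsec _)).abs.ennreal_ofReal
    · exact measurable_const
  have hGbd : ∀ n ω, G n ω ≤ ENNReal.ofReal (2 * Λ ω) := by
    intro n ω
    refine iSup_le fun p => ?_
    split_ifs with h
    · refine ENNReal.ofReal_le_ofReal ?_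
      calc |ℓ (e p.1) ω - ℓ (e p.2) ω| ≤ |ℓ (e p.1) ω| + |ℓ (e p.2) ω| := abs_sub _ _
        _ ≤ Λ ω + Λ ω := add_le_add (hdom _ _) (hdom _ _)
        _ = 2 * Λ ω := by ring
    · exact zero_le
  have hGne : ∀ n ω, G n ω ≠ ⊤ := fun n ω => ((hGbd n ω).trans_lt ENNReal.ofReal_lt_top).ne
  set g : ℕ → Ω → ℝ := fun n ω => (G n ω).toReal with hg_def
  have hgmeas : ∀ n, StronglyMeasurable (g n) :=
    fun n => (hGmeas n).ennreal_toReal.stronglyMeasurable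
  -- key pointwise bound
  have keyA : ∀ ω, Continuous (fun u => ℓ u ω) → ∀ (n : ℕ) (u : U) (k : ℕ),
      dist u (e k) < (2 * ((n : ℝ) + 1))⁻¹ → |ℓ u ω - ℓ (e k) ω| ≤ g n ω := by
    intro ω hcω n u k hdist
    have hhalf : (0:ℝ) < (2 * ((n : ℝ) + 1))⁻¹ := by positivity
    refine le_of_forall_pos_le_add fun η hη => ?_
    have hc : ContinuousAt (fun v => ℓ v ω) u := hcω.continuousAt
    rcases Metric.continuousAt_iff.1 hc η hη with ⟨r, hr, hball⟩
    rcases he.exists_dist_lt u (lt_min hr hhalf) with ⟨m, hm⟩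
    have hm1 : dist u (e m) < r := hm.trans_le (min_le_left _ _)
    have hm2 : dist u (e m) < (2 * ((n : ℝ) + 1))⁻¹ := hm.trans_le (min_le_right _ _)
    have hmk : dist (e m) (e k) ≤ ((n : ℝ) + 1)⁻¹ := by
      calc dist (e m) (e k) ≤ dist (e m) u + dist u (e k) := dist_triangle _ _ _
        _ ≤ (2 * ((n : ℝ) + 1))⁻¹ + (2 * ((n : ℝ) + 1))⁻¹ := by
            rw [dist_comm]; exact add_le_add hm2.le hdist.le
        _ = ((n : ℝ) + 1)⁻¹ := by rw [mul_inv, ← two_mul, ← mul_assoc, mul_inv_cancel₀ two_ne_zero, one_mul]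
    have hGle : ENNReal.ofReal |ℓ (e m) ω - ℓ (e k) ω| ≤ G n ω := by
      have := le_iSup (fun p : ℕ × ℕ => if dist (e p.1) (e p.2) ≤ ((n : ℝ) + 1)⁻¹ then
        ENNReal.ofReal |ℓ (e p.1) ω - ℓ (e p.2) ω| else 0) (m, k)
      simpa [hmk] using this
    have hmk' : |ℓ (e m) ω - ℓ (e k) ω| ≤ g n ω :=
      (ENNReal.ofReal_le_iff_le_toReal (hGne n ω)).1 hGle
    have hum : |ℓ u ω - ℓ (e m) ω| ≤ η := by
      have := hball (by rwa [dist_comm] at hm1 : dist (e m) u < r)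
      rw [Real.dist_eq] at this
      rw [abs_sub_comm]
      exact this.le
    calc |ℓ u ω - ℓ (e k) ω| ≤ |ℓ u ω - ℓ (e m) ω| + |ℓ (e m) ω - ℓ (e k) ω| :=
          abs_sub_le _ _ _
      _ ≤ η + g n ω := add_le_add hum hmk'
      _ = g n ω + η := by ring
  -- a.e. convergence of g to 0
  have keyB : ∀ᵐ ω ∂P, Tendsto (fun n => g n ω) atTop (𝓝 0) := by
    filter_upwards [hcont] with ω hcω
    have hG0 : Tendsto (fun n => G n ω) atTop (𝓝 0) := by
      rw [ENNReal.tendsto_nhds_zero]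
      intro ε' hε'
      have hδ' : (0:ℝ) < (min ε' 1).toReal := by
        apply ENNReal.toReal_pos
        · exact (lt_min hε' zero_lt_one).ne'
        · exact (min_le_right _ _).trans_lt ENNReal.one_lt_top |>.ne
      set δ' : ℝ := (min ε' 1).toReal
      have huc : UniformContinuous (fun u => ℓ u ω) :=
        CompactSpace.uniformContinuous_of_continuous hcω
      rcases Metric.uniformContinuous_iff.1 huc δ' hδ' with ⟨r, hr, hball⟩
      rcases exists_nat_gt r⁻¹ with ⟨N, hN⟩
      have hNr : ((N : ℝ) + 1)⁻¹ < r := by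
        rw [inv_lt_comm₀ (by positivity) hr]
        exact hN.trans (lt_add_one _)
      rw [eventually_atTop]
      refine ⟨N, fun n hn => ?_⟩
      have hmono : ((n : ℝ) + 1)⁻¹ ≤ ((N : ℝ) + 1)⁻¹ := by
        apply inv_anti₀ (by positivity)
        exact add_le_add_left (Nat.cast_le.2 hn) 1
      refine iSup_le fun p => ?_
      split_ifs with h
      · have : dist (e p.1) (e p.2) < r := lt_of_le_of_lt (h.trans hmono) hNr
        have hlt : |ℓ (e p.1) ω - ℓ (e p.2) ω| < δ' := by
          have := hball this
          rwa [Real.dist_eq] at this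
        calc ENNReal.ofReal |ℓ (e p.1) ω - ℓ (e p.2) ω| ≤ ENNReal.ofReal δ' :=
              ENNReal.ofReal_le_ofReal hlt.le
          _ = min ε' 1 := ENNReal.ofReal_toReal
              (((min_le_right _ _).trans_lt ENNReal.one_lt_top).ne)
          _ ≤ ε' := min_le_left _ _
      · exact zero_le
    have : Tendsto (fun n => (G n ω).toReal) atTop (𝓝 ((0:ℝ≥0∞).toReal)) :=
      (ENNReal.tendsto_toReal (by simp)).comp hG0
    simpa using this
  -- Egorov
  obtain ⟨t, htm, htle, hunif⟩ := tendstoUniformlyOn_of_ae_tendsto' (μ := P)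
    hgmeas stronglyMeasurable_const keyB hε
  refine ⟨tᶜ, htm.compl, ?_, ?_⟩
  · rw [prob_compl_eq_one_sub htm]
    exact tsub_le_tsub le_rfl htle
  intro δ hδ
  -- get uniform smallness
  rcases (Metric.tendstoUniformlyOn_iff.1 hunif δ hδ).exists with ⟨N, hN⟩
  -- finite net
  have hcover : (Set.univ : Set U) ⊆ ⋃ k : ℕ, Metric.ball (e k) ((2 * ((N : ℝ) + 1))⁻¹) := by
    intro u _
    rcases he.exists_dist_lt u (by positivity : (0:ℝ) < (2 * ((N : ℝ) + 1))⁻¹) with ⟨k, hk⟩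
    exact Set.mem_iUnion.2 ⟨k, Metric.mem_ball.2 hk⟩
  obtain ⟨F, hF⟩ := isCompact_univ.elim_finite_subcover
    (fun k : ℕ => Metric.ball (e k) ((2 * ((N : ℝ) + 1))⁻¹))
    (fun k => Metric.isOpen_ball) hcover
  refine ⟨F.image (fun k => tᶜ.indicator (ℓ (e k))), fun u => ?_⟩
  obtain ⟨k, hkF, hk⟩ : ∃ k ∈ F, u ∈ Metric.ball (e k) ((2 * ((N : ℝ) + 1))⁻¹) := by
    have := hF (Set.mem_univ u)
    simpa using this
  refine ⟨tᶜ.indicator (ℓ (e k)), Finset.mem_image_of_mem _ hkF, ?_⟩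
  rw [eLpNorm_exponent_top]
  apply eLpNormEssSup_le_of_ae_bound (C := δ)
  filter_upwards [hcont] with ω hcω
  by_cases hω : ω ∈ tᶜ
  · rw [Set.indicator_of_mem hω, Set.indicator_of_mem hω]
    have h1 : |ℓ u ω - ℓ (e k) ω| ≤ g N ω := keyA ω hcω N u k (Metric.mem_ball.1 hk)
    have h2 : g N ω < δ := by
      have := hN ω hω
      rw [dist_comm, Real.dist_eq] at this
      have hnn : 0 ≤ g N ω := ENNReal.toReal_nonneg
      simpa [abs_of_nonneg hnn] using this
    simpa [Real.norm_eq_abs] using (h1.trans h2.le)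
  · simp [Set.indicator_of_notMem hω, hδ.le]

end ErgodicDecisions
end
end

section
/- As k → ∞, the essential infima converge: ess inf_{u ∈ 𝕌_{−k,0}} E[ℓ_0(u) | 𝒴_{−k,0}] → ess inf_{u ∈ 𝕌_0} E[ℓ_0(u) | 𝒴_{−∞,0}] almost surely and in L¹(P). -/
open MeasureTheory Filter Set
open scoped ENNReal Topology symmDiff

noncomputable section

namespace ErgodicDecisions

variable {Ω U : Type*}

variable {m0 : MeasurableSpace Ω} [mU : MeasurableSpace U]

section AuxEssInf

variable {ι : Type*}

theorem exists_isEssInfFam {m : MeasurableSpace Ω}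
    (hm : m ≤ m0) (P : @MeasureTheory.Measure Ω m0) [IsProbabilityMeasure P]
    {S₀ : Set ι} (i₀ : ι) (hi₀ : i₀ ∈ S₀)
    (f : ι → Ω → ℝ) (hf : ∀ i ∈ S₀, Measurable[m] (f i))
    (H : Ω → ℝ) (hH : Measurable[m] H) (hHnn : 0 ≤ᵐ[P] H)
    (hbdd : ∀ i ∈ S₀, ∀ᵐ ω ∂P, |f i ω| ≤ H ω) :
    ∃ g : Ω → ℝ, Measurable[m] g ∧ (∀ ω, -H ω ≤ g ω) ∧ (∀ᵐ ω ∂P, |g ω| ≤ H ω) ∧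
      IsEssInfFam (m0 := m0) P S₀ f g := by
  classical
  set F : ι → Ω → ℝ := fun i ω => max (f i ω) (-H ω) with hF
  have hFmeas : ∀ i ∈ S₀, Measurable[m] (F i) := fun i hi => (hf i hi).max hH.neg
  have hFae : ∀ i ∈ S₀, F i =ᵐ[P] f i := by
    intro i hi
    filter_upwards [hbdd i hi] with ω hω
    exact max_eq_left (neg_le_of_abs_le hω)
  have hFlb : ∀ i ω, -H ω ≤ F i ω := fun i ω => le_max_right _ _
  have hFub : ∀ i ∈ S₀, ∀ᵐ ω ∂P, F i ω ≤ H ω := by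
    intro i hi
    filter_upwards [hbdd i hi, hHnn] with ω h1 h2
    exact max_le (le_of_abs_le h1) (le_trans (neg_nonpos_of_nonneg h2) h2)
  have harctan_int : ∀ (q : Ω → ℝ), Measurable[m0] q →
      Integrable (fun ω => Real.arctan (q ω)) P := by
    intro q hq
    refine Integrable.mono' (integrable_const (Real.pi / 2))
      (Measurable.aestronglyMeasurable
        (by exact Real.continuous_arctan.measurable.comp hq)) ?_
    refine Eventually.of_forall fun ω => ?_
    rw [Real.norm_eq_abs, abs_le]
    exact ⟨(Real.neg_pi_div_two_lt_arctan _).le, (Real.arctan_lt_pi_div_two _).le⟩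
  set A : Set ℝ := {r | ∃ v : ℕ → ι, (∀ n, v n ∈ S₀) ∧
      r = ∫ ω, Real.arctan (⨅ n, F (v n) ω) ∂P} with hA
  have hinf_meas : ∀ (v : ℕ → ι), (∀ n, v n ∈ S₀) →
      Measurable[m] (fun ω => ⨅ n, F (v n) ω) := by
    intro v hv
    exact Measurable.iInf (fun n => hFmeas _ (hv n))
  have hbdbelow : ∀ (v : ℕ → ι) (ω : Ω), BddBelow (range fun n => F (v n) ω) :=
    fun v ω => ⟨-H ω, by rintro r ⟨n, rfl⟩; exact hFlb _ _⟩
  have hAne : A.Nonempty := ⟨_, fun _ => i₀, fun _ => hi₀, rfl⟩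
  have hAbd : BddBelow A := by
    refine ⟨-(Real.pi/2), ?_⟩
    rintro r ⟨v, hv, rfl⟩
    calc -(Real.pi/2) = ∫ (_ : Ω), -(Real.pi/2) ∂P := by simp
    _ ≤ _ := by
        refine integral_mono (integrable_const _)
          (harctan_int _ ((hinf_meas v hv).mono hm le_rfl)) ?_
        exact fun ω => (Real.neg_pi_div_two_lt_arctan _).le
  set c := sInf A with hc
  have hchoice : ∀ k : ℕ, ∃ v : ℕ → ι, (∀ n, v n ∈ S₀) ∧
      (∫ ω, Real.arctan (⨅ n, F (v n) ω) ∂P) < c + 1 / (k + 1) := by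
    intro k
    have : c < c + 1 / (k + 1) := lt_add_of_pos_right _ (by positivity)
    obtain ⟨r, hrA, hr⟩ := exists_lt_of_csInf_lt hAne this
    obtain ⟨v, hv, rfl⟩ := hrA
    exact ⟨v, hv, hr⟩
  choose v hvmem hvlt using hchoice
  set w : ℕ → ι := fun p => v (Nat.unpair p).1 (Nat.unpair p).2 with hw
  have hwmem : ∀ n, w n ∈ S₀ := fun n => hvmem _ _
  set g : Ω → ℝ := fun ω => ⨅ n, F (w n) ω with hg
  have hgmeas : Measurable[m] g := hinf_meas w hwmem
  have hglb : ∀ ω, -H ω ≤ g ω := fun ω => le_ciInf fun n => hFlb _ _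
  have hgle : ∀ (n : ℕ) (ω : Ω), g ω ≤ F (w n) ω := fun n ω => ciInf_le (hbdbelow w ω) n
  have hgc : (∫ ω, Real.arctan (g ω) ∂P) ≤ c := by
    have hlim : Tendsto (fun k : ℕ => c + 1 / ((k : ℝ) + 1)) atTop (𝓝 c) := by
      simpa using tendsto_const_nhds.add (tendsto_one_div_add_atTop_nhds_zero_nat (𝕜 := ℝ))
    refine ge_of_tendsto hlim (Eventually.of_forall fun k => ?_)
    refine le_trans ?_ (hvlt k).le
    refine integral_mono (harctan_int _ (hgmeas.mono hm le_rfl))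
      (harctan_int _ ((hinf_meas _ (hvmem k)).mono hm le_rfl)) fun ω => ?_
    refine Real.arctan_strictMono.monotone (le_ciInf fun n => ?_)
    have : g ω ≤ F (w (Nat.pair k n)) ω := hgle _ ω
    simpa [w, Nat.unpair_pair] using this
  have key : ∀ i ∈ S₀, ∀ᵐ ω ∂P, g ω ≤ F i ω := by
    intro i hi
    set w' : ℕ → ι := fun n => Nat.casesOn n i (fun k => w k) with hw'
    have hw'mem : ∀ n, w' n ∈ S₀ := by rintro (_ | n); exacts [hi, hwmem n]
    set q : Ω → ℝ := fun ω => ⨅ n, F (w' n) ω with hq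
    have hqmin : ∀ ω, q ω = min (F i ω) (g ω) := by
      intro ω
      apply le_antisymm
      · refine le_min (ciInf_le (hbdbelow w' ω) 0) (le_ciInf fun n => ?_)
        exact ciInf_le (hbdbelow w' ω) (n + 1)
      · refine le_ciInf fun n => ?_
        cases n with
        | zero => exact min_le_left _ _
        | succ n => exact (min_le_right _ _).trans (hgle n ω)
    have hqA : (∫ ω, Real.arctan (q ω) ∂P) ∈ A := ⟨w', hw'mem, rfl⟩
    have hqmeas : Measurable[m] q := hinf_meas w' hw'mem
    have hgint := harctan_int _ (hgmeas.mono hm le_rfl)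
    have hqint := harctan_int _ (hqmeas.mono hm le_rfl)
    have h2 : ∀ ω, Real.arctan (q ω) ≤ Real.arctan (g ω) := fun ω =>
      Real.arctan_strictMono.monotone (by rw [hqmin]; exact min_le_right _ _)
    have hzero : (∫ ω, (Real.arctan (g ω) - Real.arctan (q ω)) ∂P) = 0 := by
      rw [integral_sub hgint hqint]
      have h1 : (∫ ω, Real.arctan (g ω) ∂P) ≤ ∫ ω, Real.arctan (q ω) ∂P :=
        hgc.trans (csInf_le hAbd hqA)
      have h3 : (∫ ω, Real.arctan (q ω) ∂P) ≤ ∫ ω, Real.arctan (g ω) ∂P :=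
        integral_mono hqint hgint h2
      linarith
    have hdiff : (fun ω => Real.arctan (g ω) - Real.arctan (q ω)) =ᵐ[P] 0 :=
      (integral_eq_zero_iff_of_nonneg_ae
        (Eventually.of_forall fun ω => sub_nonneg.2 (h2 ω)) (hgint.sub hqint)).1 hzero
    filter_upwards [hdiff] with ω hω
    have harc : Real.arctan (g ω) = Real.arctan (q ω) := by
      have := sub_eq_zero.1 hω; linarith [this]
    have hgq : g ω = q ω := Real.arctan_injective harc
    rw [hqmin] at hgq
    exact hgq.le.trans (min_le_left _ _)
  refine ⟨g, hgmeas, hglb, ?_, hgmeas.mono hm le_rfl, ?_, ?_⟩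
  · filter_upwards [hFub _ (hwmem 0)] with ω h1
    rw [abs_le]
    exact ⟨hglb ω, (hgle 0 ω).trans h1⟩
  · intro i hi
    filter_upwards [key i hi, hbdd i hi] with ω h1 h2
    calc g ω ≤ max (f i ω) (-H ω) := h1
    _ = f i ω := max_eq_left (neg_le_of_abs_le h2)
  · intro h hmeas hle
    have hall : ∀ᵐ ω ∂P, ∀ n, h ω ≤ F (w n) ω := by
      rw [ae_all_iff]
      intro n
      filter_upwards [hle _ (hwmem n)] with ω hω
      exact hω.trans (le_max_left _ _)
    filter_upwards [hall] with ω hω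
    exact le_ciInf hω

end AuxEssInf

section AuxMisc

theorem measurable_iter {T S : Ω → Ω} (hT : Measurable T) (hS : Measurable S) :
    ∀ k : ℤ, Measurable (iter T S k)
  | Int.ofNat n => hT.iterate n
  | Int.negSucc n => hS.iterate (n + 1)

theorem obsField_le_ambient {T S : Ω → Ω} (hT : Measurable T) (hS : Measurable S)
    {Y : MeasurableSpace Ω} (hY : Y ≤ m0) (m n : ℤ) :
    obsField T S Y m n ≤ m0 := by
  refine iSup₂_le fun k _ => ?_
  exact measurable_iff_comap_le.mp ((measurable_iter hT hS k).mono le_rfl hY)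

theorem obsFieldLE_le_ambient {T S : Ω → Ω} (hT : Measurable T) (hS : Measurable S)
    {Y : MeasurableSpace Ω} (hY : Y ≤ m0) (n : ℤ) :
    obsFieldLE T S Y n ≤ m0 := by
  refine iSup₂_le fun k _ => ?_
  exact measurable_iff_comap_le.mp ((measurable_iter hT hS k).mono le_rfl hY)

theorem obsField_mono_left {T S : Ω → Ω} {Y : MeasurableSpace Ω} {m m' n : ℤ} (h : m' ≤ m) :
    obsField T S Y m n ≤ obsField T S Y m' n :=
  biSup_mono (Set.Icc_subset_Icc_left h)

theorem obsField_le_obsFieldLE {T S : Ω → Ω} {Y : MeasurableSpace Ω} (m n : ℤ) :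
    obsField T S Y m n ≤ obsFieldLE T S Y n :=
  iSup₂_le fun k hk =>
    le_iSup₂ (f := fun k (_ : k ∈ Set.Iic n) => MeasurableSpace.comap (iter T S k) Y) k hk.2

theorem iSup_obsField_eq {T S : Ω → Ω} {Y : MeasurableSpace Ω} :
    (⨆ k : ℕ, obsField T S Y (-(k : ℤ)) 0) = obsFieldLE T S Y 0 := by
  apply le_antisymm
  · exact iSup_le fun k => obsField_le_obsFieldLE _ _
  · refine iSup₂_le fun j hj => ?_
    have hj0 : j ≤ 0 := hj
    have hmem : j ∈ Set.Icc (-(((-j).toNat : ℕ) : ℤ)) 0 := by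
      constructor
      · rw [Int.toNat_of_nonneg (neg_nonneg.2 hj0), neg_neg]
      · exact hj0
    calc MeasurableSpace.comap (iter T S j) Y
        ≤ obsField T S Y (-(((-j).toNat : ℕ) : ℤ)) 0 :=
          le_iSup₂ (f := fun k (_ : k ∈ Set.Icc (-(((-j).toNat : ℕ) : ℤ)) 0) =>
            MeasurableSpace.comap (iter T S k) Y) j hmem
      _ ≤ _ := le_iSup (fun k : ℕ => obsField T S Y (-(k : ℤ)) 0) (-j).toNat

theorem uniformIntegrable_of_dominated {P : @MeasureTheory.Measure Ω m0}
    {f h : ℕ → Ω → ℝ}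
    (hmeas : ∀ i, AEStronglyMeasurable (f i) P) (hh : UniformIntegrable h 1 P)
    (hle : ∀ i, ∀ᵐ ω ∂P, ‖f i ω‖ ≤ ‖h i ω‖) : UniformIntegrable f 1 P := by
  obtain ⟨hh1, hh2, C, hC⟩ := hh
  refine ⟨hmeas, ?_, C, fun i => le_trans (eLpNorm_mono_ae (hle i)) (hC i)⟩
  intro ε hε
  obtain ⟨δ, hδ, hδ'⟩ := hh2 hε
  refine ⟨δ, hδ, fun i s hs hsδ => le_trans (eLpNorm_mono_ae ?_) (hδ' i s hs hsδ)⟩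
  filter_upwards [hle i] with ω hω
  by_cases hωs : ω ∈ s
  · simpa [Set.indicator_of_mem hωs] using hω
  · simp [Set.indicator_of_notMem hωs]

end AuxMisc

/-- Lemma 4.4: the essential infima
`ess inf_{u ∈ 𝕌_{-k,0}} E[ℓ₀(u)|𝒴_{-k,0}]` converge, a.s. and in `L¹`, to
`ess inf_{u ∈ 𝕌₀} E[ℓ₀(u)|𝒴_{-∞,0}]` as `k → ∞`. -/
theorem statement16
    {Ω U : Type*} [m0 : MeasurableSpace Ω] [MeasurableSpace U] [Nonempty U]
    (P : Measure Ω) [IsProbabilityMeasure P]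
    (T S : Ω → Ω) (hT : Ergodic T P) (hS : MeasurePreserving S P P)
    (hST : Function.LeftInverse S T) (hTS : Function.RightInverse S T)
    (ℓ : U → Ω → ℝ) (hℓ : Measurable fun p : U × Ω => ℓ p.1 p.2)
    (Λ : Ω → ℝ) (hΛ : Integrable Λ P) (hdom : ∀ u ω, |ℓ u ω| ≤ Λ ω)
    (Y : MeasurableSpace Ω) (hY : Y ≤ m0)
    :
    ∃ (g : ℕ → Ω → ℝ) (glim : Ω → ℝ),
      (∀ k : ℕ, IsEssInfFam P (Umn T S Y (-(k : ℤ)) 0 : Set (Ω → U))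
        (fun v => P[lossAt T S ℓ 0 v | obsField T S Y (-(k : ℤ)) 0]) (g k)) ∧
      IsEssInfFam P (Un T S Y 0 : Set (Ω → U))
        (fun v => P[lossAt T S ℓ 0 v | obsFieldLE T S Y 0]) glim ∧
      (∀ᵐ ω ∂P, Tendsto (fun k : ℕ => g k ω) atTop (𝓝 (glim ω))) ∧
      Tendsto (fun k : ℕ => ∫ ω, |g k ω - glim ω| ∂P) atTop (𝓝 0) := by
  classical
  have hTm : @Measurable Ω Ω m0 m0 T := @MeasurePreserving.measurable Ω Ω m0 m0 T P P hT.toMeasurePreserving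
  have hSm : @Measurable Ω Ω m0 m0 S := @MeasurePreserving.measurable Ω Ω m0 m0 S P P hS
  set 𝒢 : ℕ → MeasurableSpace Ω := fun k => obsField T S Y (-(k : ℤ)) 0 with h𝒢
  have h𝒢le : ∀ k, 𝒢 k ≤ m0 := fun k => obsField_le_ambient hTm hSm hY _ _
  have h𝒢mono : Monotone 𝒢 := by
    intro i j hij
    refine obsField_mono_left ?_
    exact neg_le_neg (by exact_mod_cast hij)
  set mInf : MeasurableSpace Ω := obsFieldLE T S Y 0 with hmInfdef
  have hmInfle : mInf ≤ m0 := obsFieldLE_le_ambient hTm hSm hY 0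
  have h𝒢mInf : ∀ k, 𝒢 k ≤ mInf := fun k => obsField_le_obsFieldLE _ _
  set ℱ : Filtration ℕ m0 := ⟨𝒢, h𝒢mono, h𝒢le⟩ with hℱ
  have hsup : (⨆ k, ℱ k) = mInf := iSup_obsField_eq
  -- basic facts about the loss
  have hL : ∀ v : Ω → U, lossAt T S ℓ 0 v = fun ω => ℓ (v ω) ω := by
    intro v; funext ω
    show ℓ (v ω) (T^[0] ω) = _
    rw [Function.iterate_zero]; rfl
  obtain ⟨u₀⟩ := ‹Nonempty U›
  have hΛnn : ∀ ω, 0 ≤ Λ ω := fun ω => (abs_nonneg _).trans (hdom u₀ ω)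
  have hLmeas : ∀ {m' : MeasurableSpace Ω} (v : Ω → U), m' ≤ m0 → Measurable[m'] v →
      Measurable[m0] (lossAt T S ℓ 0 v) := by
    intro m' v hm' hv
    rw [hL]
    exact hℓ.comp ((hv.mono hm' le_rfl).prodMk measurable_id)
  have hLint : ∀ {m' : MeasurableSpace Ω} (v : Ω → U), m' ≤ m0 → Measurable[m'] v →
      Integrable (lossAt T S ℓ 0 v) P := by
    intro m' v hm' hv
    refine Integrable.mono' hΛ (hLmeas v hm' hv).aestronglyMeasurable
      (Eventually.of_forall fun ω => ?_)
    rw [hL v, Real.norm_eq_abs]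
    exact hdom _ _
  have hLbd : ∀ (v : Ω → U) (ω : Ω), |lossAt T S ℓ 0 v ω| ≤ Λ ω := by
    intro v ω; rw [hL v]; exact hdom _ _
  -- conditional expectation abs bound
  have habs : ∀ {m' : MeasurableSpace Ω}, m' ≤ m0 → ∀ f : Ω → ℝ, Integrable f P →
      (∀ ω, |f ω| ≤ Λ ω) → ∀ᵐ ω ∂P, |(P[f|m']) ω| ≤ (P[Λ|m']) ω := by
    intro m' hm' f hfint hfb
    have h1 : P[f|m'] ≤ᵐ[P] P[Λ|m'] :=
      condExp_mono hfint hΛ (Eventually.of_forall fun ω => le_of_abs_le (hfb ω))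
    have h2 : P[-Λ|m'] ≤ᵐ[P] P[f|m'] :=
      condExp_mono hΛ.neg hfint (Eventually.of_forall fun ω => neg_le_of_abs_le (hfb ω))
    filter_upwards [h1, h2, condExp_neg (μ := P) (m := m') Λ] with ω hω1 hω2 hω3
    rw [abs_le]
    refine ⟨?_, hω1⟩
    rw [hω3] at hω2
    simpa using hω2
  -- essential infima at each level k
  have hex : ∀ k : ℕ, ∃ g : Ω → ℝ, Measurable[𝒢 k] g ∧ (∀ ω, -(P[Λ|𝒢 k]) ω ≤ g ω) ∧
      (∀ᵐ ω ∂P, |g ω| ≤ (P[Λ|𝒢 k]) ω) ∧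
      IsEssInfFam P (Umn T S Y (-(k : ℤ)) 0 : Set (Ω → U))
        (fun v => P[lossAt T S ℓ 0 v|𝒢 k]) g := by
    intro k
    refine exists_isEssInfFam (h𝒢le k) P (ι := Ω → U)
      (S₀ := (Umn T S Y (-(k : ℤ)) 0 : Set (Ω → U)))
      (fun _ => u₀) (by exact measurable_const)
      (fun v => P[lossAt T S ℓ 0 v|𝒢 k]) (fun v _ => stronglyMeasurable_condExp.measurable)
      (P[Λ|𝒢 k]) stronglyMeasurable_condExp.measurable
      (condExp_nonneg (Eventually.of_forall hΛnn)) ?_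
    intro v hv
    exact habs (h𝒢le k) _ (hLint v (h𝒢le k) hv) (hLbd v)
  choose g hgmeas hglb hgbdd hgInf using hex
  -- essential infimum at the limit
  have hexlim : ∃ glim : Ω → ℝ, Measurable[mInf] glim ∧ (∀ ω, -(P[Λ|mInf]) ω ≤ glim ω) ∧
      (∀ᵐ ω ∂P, |glim ω| ≤ (P[Λ|mInf]) ω) ∧
      IsEssInfFam P (Un T S Y 0 : Set (Ω → U))
        (fun v => P[lossAt T S ℓ 0 v|mInf]) glim := by
    refine exists_isEssInfFam hmInfle P (ι := Ω → U)
      (S₀ := (Un T S Y 0 : Set (Ω → U))) (fun _ => u₀) ?_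
      (fun v => P[lossAt T S ℓ 0 v|mInf]) (fun v _ => stronglyMeasurable_condExp.measurable)
      (P[Λ|mInf]) stronglyMeasurable_condExp.measurable
      (condExp_nonneg (Eventually.of_forall hΛnn)) ?_
    · exact Set.mem_iUnion₂.2 ⟨0, Set.self_mem_Iic, by exact measurable_const⟩
    · intro v hv
      obtain ⟨mm, hmm, hvm⟩ := Set.mem_iUnion₂.1 hv
      exact habs hmInfle _ (hLint v (obsField_le_ambient hTm hSm hY mm 0) hvm) (hLbd v)
  obtain ⟨glim, hglimmeas, hglimlb, hglimbdd, hglimInf⟩ := hexlim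
  -- integrability
  have hgint : ∀ k, Integrable (g k) P := fun k =>
    Integrable.mono' integrable_condExp
      (((hgmeas k).mono (h𝒢le k) le_rfl)).aestronglyMeasurable
      ((hgbdd k).mono fun ω h => by rwa [Real.norm_eq_abs])
  have hglimint : Integrable glim P :=
    Integrable.mono' integrable_condExp
      ((hglimmeas.mono hmInfle le_rfl)).aestronglyMeasurable
      (hglimbdd.mono fun ω h => by rwa [Real.norm_eq_abs])
  -- monotonicity of decision sets
  have hUmn_mono : ∀ {k k' : ℕ}, k ≤ k' →
      (Umn T S Y (-(k : ℤ)) 0 : Set (Ω → U)) ⊆ Umn T S Y (-(k' : ℤ)) 0 := by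
    intro k k' hkk v hv
    exact Measurable.mono hv (h𝒢mono hkk) le_rfl
  -- supermartingale step
  have hstep : ∀ k, P[g (k + 1)|𝒢 k] ≤ᵐ[P] g k := by
    intro k
    refine (hgInf k).2.2 _ (stronglyMeasurable_condExp.mono (h𝒢le k)).measurable ?_
    intro v hv
    have h1 : ∀ᵐ ω ∂P, g (k + 1) ω ≤ (P[lossAt T S ℓ 0 v|𝒢 (k + 1)]) ω :=
      (hgInf (k + 1)).2.1 v (hUmn_mono (Nat.le_succ k) hv)
    have h2 : P[g (k + 1)|𝒢 k] ≤ᵐ[P] P[P[lossAt T S ℓ 0 v|𝒢 (k + 1)]|𝒢 k] :=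
      condExp_mono (hgint (k + 1)) integrable_condExp h1
    have h3 : P[P[lossAt T S ℓ 0 v|𝒢 (k + 1)]|𝒢 k] =ᵐ[P] P[lossAt T S ℓ 0 v|𝒢 k] :=
      condExp_condExp_of_le (h𝒢mono (Nat.le_succ k)) (h𝒢le (k + 1))
    filter_upwards [h2, h3] with ω hω2 hω3
    rw [← hω3]
    exact hω2
  -- tower property
  have htower : ∀ i j, i ≤ j → P[g j|𝒢 i] ≤ᵐ[P] g i := by
    intro i j hij
    induction j, hij using Nat.le_induction with
    | base =>
        rw [condExp_of_stronglyMeasurable (h𝒢le i)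
          (Measurable.stronglyMeasurable (hgmeas i)) (hgint i)]
    | succ j hij ih =>
        have h1 : P[g (j + 1)|𝒢 i] =ᵐ[P] P[P[g (j + 1)|𝒢 j]|𝒢 i] :=
          (condExp_condExp_of_le (h𝒢mono hij) (h𝒢le j)).symm
        have h2 : P[P[g (j + 1)|𝒢 j]|𝒢 i] ≤ᵐ[P] P[g j|𝒢 i] :=
          condExp_mono integrable_condExp (hgint j) (hstep j)
        filter_upwards [h1, h2, ih] with ω hω1 hω2 hω3
        rw [hω1]
        exact hω2.trans hω3
  -- submartingale
  have hsub : Submartingale (fun k => -(g k)) ℱ P := by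
    refine ⟨fun k => ((hgmeas k).neg).stronglyMeasurable, ?_, fun k => (hgint k).neg⟩
    intro i j hij
    have h1 := htower i j hij
    have h2 : P[-(g j)|𝒢 i] =ᵐ[P] -(P[g j|𝒢 i]) := condExp_neg _ _
    filter_upwards [h1, h2] with ω hω1 hω2
    show -(g i) ω ≤ (P[-(g j)|𝒢 i]) ω
    rw [hω2]
    simp only [Pi.neg_apply]
    linarith
  -- uniform integrability
  have hUIH : UniformIntegrable (fun k => P[Λ|ℱ k]) 1 P :=
    hΛ.uniformIntegrable_condExp_filtration (f := ℱ)
  have hUI : UniformIntegrable (fun k => -(g k)) 1 P := by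
    refine uniformIntegrable_of_dominated
      (fun k => (((hgmeas k).neg).mono (h𝒢le k) le_rfl).aestronglyMeasurable) hUIH ?_
    intro k
    filter_upwards [hgbdd k] with ω h
    rw [Real.norm_eq_abs, Real.norm_eq_abs]
    simp only [Pi.neg_apply, abs_neg]
    exact h.trans (le_abs_self _)
  obtain ⟨R, hR⟩ := hUI.2.2
  set G : Ω → ℝ := ℱ.limitProcess (fun k => -(g k)) P with hGdef
  have hae : ∀ᵐ ω ∂P, Tendsto (fun k => -(g k ω)) atTop (𝓝 (G ω)) :=
    hsub.ae_tendsto_limitProcess hR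
  have hGmeas : Measurable[m0] G :=
    (Filtration.stronglyMeasurable_limit_process').measurable
  -- Lévy upward
  have hlevy : ∀ f : Ω → ℝ,
      ∀ᵐ ω ∂P, Tendsto (fun k => (P[f|𝒢 k]) ω) atTop (𝓝 ((P[f|mInf]) ω)) := by
    intro f
    have h := tendsto_ae_condExp (μ := P) (ℱ := ℱ) f
    have hs : (⨆ n, ℱ n) = mInf := hsup
    rw [hs] at h
    exact h
  -- lower bound for -G
  have hlow : ∀ v ∈ (Un T S Y 0 : Set (Ω → U)),
      ∀ᵐ ω ∂P, -G ω ≤ (P[lossAt T S ℓ 0 v|mInf]) ω := by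
    intro v hv
    obtain ⟨mm, hmm0, hvm⟩ := Set.mem_iUnion₂.1 hv
    set j := (-mm).toNat with hjdef
    have hmem : ∀ k, j ≤ k → v ∈ (Umn T S Y (-(k : ℤ)) 0 : Set (Ω → U)) := by
      intro k hk
      refine Measurable.mono hvm (obsField_mono_left ?_) le_rfl
      have h1 : ((-mm).toNat : ℤ) ≤ (k : ℤ) := by exact_mod_cast hk
      rw [Int.toNat_of_nonneg (neg_nonneg.2 hmm0)] at h1
      linarith
    have hball : ∀ᵐ ω ∂P, ∀ k, j ≤ k → g k ω ≤ (P[lossAt T S ℓ 0 v|𝒢 k]) ω := by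
      rw [ae_all_iff]
      intro k
      by_cases hk : j ≤ k
      · filter_upwards [(hgInf k).2.1 v (hmem k hk)] with ω h _
        exact h
      · filter_upwards with ω h
        exact absurd h hk
    filter_upwards [hae, hlevy (lossAt T S ℓ 0 v), hball] with ω h1 h2 h3
    have h1' : Tendsto (fun k => g k ω) atTop (𝓝 (-G ω)) := by
      have := h1.neg
      simpa using this
    exact le_of_tendsto_of_tendsto h1' h2 (eventually_atTop.2 ⟨j, h3⟩)
  -- -G ≤ glim
  have hlow' : ∀ᵐ ω ∂P, -G ω ≤ glim ω :=
    hglimInf.2.2 (fun ω => -G ω) hGmeas.neg hlow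
  -- glim ≤ -G
  have hup : ∀ k, P[glim|𝒢 k] ≤ᵐ[P] g k := by
    intro k
    refine (hgInf k).2.2 _ (stronglyMeasurable_condExp.mono (h𝒢le k)).measurable ?_
    intro v hv
    have hvU : v ∈ (Un T S Y 0 : Set (Ω → U)) := by
      refine Set.mem_iUnion₂.2 ⟨-(k : ℤ), ?_, hv⟩
      simp
    have h1 : ∀ᵐ ω ∂P, glim ω ≤ (P[lossAt T S ℓ 0 v|mInf]) ω := hglimInf.2.1 v hvU
    have h2 : P[glim|𝒢 k] ≤ᵐ[P] P[P[lossAt T S ℓ 0 v|mInf]|𝒢 k] :=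
      condExp_mono hglimint integrable_condExp h1
    have h3 : P[P[lossAt T S ℓ 0 v|mInf]|𝒢 k] =ᵐ[P] P[lossAt T S ℓ 0 v|𝒢 k] :=
      condExp_condExp_of_le (h𝒢mInf k) hmInfle
    filter_upwards [h2, h3] with ω hω2 hω3
    rw [← hω3]
    exact hω2
  have hfix : P[glim|mInf] = glim :=
    condExp_of_stronglyMeasurable hmInfle (Measurable.stronglyMeasurable hglimmeas) hglimint
  have hup' : ∀ᵐ ω ∂P, glim ω ≤ -G ω := by
    have hball : ∀ᵐ ω ∂P, ∀ k, (P[glim|𝒢 k]) ω ≤ g k ω := ae_all_iff.2 hup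
    filter_upwards [hae, hlevy glim, hball] with ω h1 h2 h3
    rw [hfix] at h2
    have h1' : Tendsto (fun k => g k ω) atTop (𝓝 (-G ω)) := by
      have := h1.neg
      simpa using this
    exact le_of_tendsto_of_tendsto h2 h1' (Eventually.of_forall h3)
  have heq : (fun ω => -G ω) =ᵐ[P] glim := by
    filter_upwards [hlow', hup'] with ω hω1 hω2
    exact le_antisymm hω1 hω2
  -- assemble
  refine ⟨g, glim, fun k => hgInf k, hglimInf, ?_, ?_⟩
  · filter_upwards [hae, heq] with ω h1 h2
    have h1' : Tendsto (fun k => g k ω) atTop (𝓝 (-G ω)) := by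
      have := h1.neg
      simpa using this
    rwa [show -G ω = glim ω from h2] at h1'
  · have hL1 : Tendsto (fun n => eLpNorm ((fun k => -(g k)) n - G) 1 P) atTop (𝓝 0) :=
      hsub.tendsto_eLpNorm_one_limitProcess hUI
    have hkey : ∀ n : ℕ, (∫ ω, |g n ω - glim ω| ∂P)
        = (eLpNorm ((fun k => -(g k)) n - G) 1 P).toReal := by
      intro n
      have hcongr : ((fun k => -(g k)) n - G) =ᵐ[P] fun ω => -(g n ω - glim ω) := by
        filter_upwards [heq] with ω hω
        have : G ω = -glim ω := by
          have := hω
          linarith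
        simp [Pi.sub_apply, Pi.neg_apply, this]
        ring
      have h1 : eLpNorm ((fun k => -(g k)) n - G) 1 P
          = eLpNorm (fun ω => g n ω - glim ω) 1 P := by
        rw [eLpNorm_congr_ae hcongr,
          show (fun ω => -(g n ω - glim ω)) = -(fun ω => g n ω - glim ω) from rfl, eLpNorm_neg]
      have hasm : AEStronglyMeasurable[m0] (fun ω => g n ω - glim ω) P :=
        ((hgint n).sub hglimint).aestronglyMeasurable
      have h2 := integral_norm_eq_lintegral_enorm (μ := P) hasm
      rw [h1, eLpNorm_one_eq_lintegral_enorm, ← h2]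
      simp_rw [Real.norm_eq_abs]
    have htoReal : Tendsto (fun n => (eLpNorm ((fun k => -(g k)) n - G) 1 P).toReal)
        atTop (𝓝 (0 : ℝ)) := by
      have := (ENNReal.tendsto_toReal (by simp : (0 : ℝ≥0∞) ≠ ⊤)).comp hL1
      simpa [Function.comp_def] using this
    refine htoReal.congr fun n => (hkey n).symm


end ErgodicDecisions
end
end
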